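/- For each b ∈ {1,2,3} and all m ≥ 3, the partial sums r(m) = ∑_{k=0}^{m} P(3k+b) satisfy r(m) = 3·r(m-1) - 2·r(m-2) + r(m-3) + 1. -/

import Mathlib

def padovan : ℕ → ℤ
  | 0 => 1
  | 1 => 1
  | 2 => 1
  | n + 3 => padovan (n + 1) + padovan n

lemma padovan_add_three (n : ℕ) : padovan (n + 3) = padovan (n + 1) + padovan n := rfl

lemma padovan_nine (n : ℕ) :
    padovan (n + 9) = 3 * padovan (n + 6) - 2 * padovan (n + 3) + padovan n := by
  have h9 : padovan (n + 9) = padovan (n + 7) + padovan (n + 6) := padovan_add_three (n + 6)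
  have h8 : padovan (n + 8) = padovan (n + 6) + padovan (n + 5) := padovan_add_three (n + 5)
  have h7 : padovan (n + 7) = padovan (n + 5) + padovan (n + 4) := padovan_add_three (n + 4)
  have h6 : padovan (n + 6) = padovan (n + 4) + padovan (n + 3) := padovan_add_three (n + 3)
  have h5 : padovan (n + 5) = padovan (n + 3) + padovan (n + 2) := padovan_add_three (n + 2)
  have h4 : padovan (n + 4) = padovan (n + 2) + padovan (n + 1) := padovan_add_three (n + 1)
  have h3 : padovan (n + 3) = padovan (n + 1) + padovan n := padovan_add_three n
  linarith

lemma padovan_aux (b : ℕ) (hb : b = 1 ∨ b = 2 ∨ b = 3) (n : ℕ) :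
    (∑ k ∈ Finset.range (n + 4), padovan (3 * k + b))
      = 3 * (∑ k ∈ Finset.range (n + 3), padovan (3 * k + b))
        - 2 * (∑ k ∈ Finset.range (n + 2), padovan (3 * k + b))
        + (∑ k ∈ Finset.range (n + 1), padovan (3 * k + b)) + 1 := by
  induction n with
  | zero =>
      rcases hb with rfl | rfl | rfl <;>
        norm_num [Finset.sum_range_succ, padovan]
  | succ n ih =>
      have key : padovan (3 * (n + 4) + b)
          = 3 * padovan (3 * (n + 3) + b) - 2 * padovan (3 * (n + 2) + b)
            + padovan (3 * (n + 1) + b) := by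
        have := padovan_nine (3 * (n + 1) + b)
        rw [show 3 * (n + 1) + b + 9 = 3 * (n + 4) + b by ring,
            show 3 * (n + 1) + b + 6 = 3 * (n + 3) + b by ring,
            show 3 * (n + 1) + b + 3 = 3 * (n + 2) + b by ring] at this
        exact this
      simp only [Finset.sum_range_succ] at ih ⊢
      ring_nf at ih key ⊢
      have hs : ∑ x ∈ Finset.range n, padovan (x * 3 + b) = ∑ x ∈ Finset.range n, padovan (b + x * 3) :=
        Finset.sum_congr rfl (fun x _ => by rw [add_comm])
      linarith

theorem padovan_col_sum_3 (b : ℕ) (hb : b = 1 ∨ b = 2 ∨ b = 3) (m : ℕ) (hm : 3 ≤ m) :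
    (∑ k ∈ Finset.range (m + 1), padovan (3 * k + b))
      = 3 * (∑ k ∈ Finset.range m, padovan (3 * k + b))
        - 2 * (∑ k ∈ Finset.range (m - 1), padovan (3 * k + b))
        + (∑ k ∈ Finset.range (m - 2), padovan (3 * k + b)) + 1 := by
  obtain ⟨n, rfl⟩ := Nat.exists_eq_add_of_le hm
  have := padovan_aux b hb n
  simpa [show 3 + n = n + 3 by ring, show n + 3 + 1 = n + 4 from rfl] using this
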